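/- Let V be a self-orthogonal d-dimensional F_q-subspace of F_q^{2n}, let c : V → ℂ with c(0) = 1 be such that W(v) := c(v)·W̃(v) satisfies W(v) W(v') = W(v+v') for all v, v' ∈ V, and let (P_{[w]})_{[w] ∈ F_q^{2n}/V^{⊥J}} be the family of mutually orthogonal projections summing to the identity with W(v) = ∑_{[w]} ω^{⟨v,Jw⟩} P_{[w]} for all v ∈ V. Then for all w, w' ∈ F_q^{2n}, conjugation satisfies W̃(w') P_{[w]} W̃(w')* = P_{[w+w']}, where W̃(w')* denotes the conjugate transpose of W̃(w'). -/

import Mathlib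

/-- `ω = exp(2πi/p)`, a primitive `p`-th root of unity. -/
noncomputable def omg (p : ℕ) : ℂ := Complex.exp (2 * (Real.pi : ℂ) * Complex.I / (p : ℂ))

/-- The `F_p`-valued pairing `⟨x, y⟩ = tr(∑ s, x s * y s)` on `F_q^n`, where
`tr : F_q → F_p` is the field trace. -/
noncomputable def ip (p : ℕ) {K : Type*} [Field K] [Fintype K] [Algebra (ZMod p) K]
    {n : ℕ} (x y : Fin n → K) : ZMod p :=
  Algebra.trace (ZMod p) K (∑ s, x s * y s)

/-- The Weyl operator `W̃(a,b)`: the `q^n × q^n` complex matrix, with rows and columns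
indexed by `F_q^n`, whose `(j,k)` entry is `ω^{⟨b,k⟩}` if `j = k + a` and `0`
otherwise. -/
noncomputable def Wt (p : ℕ) {K : Type*} [Field K] [Fintype K] [DecidableEq K]
    [Algebra (ZMod p) K] {n : ℕ} (a b : Fin n → K) :
    Matrix (Fin n → K) (Fin n → K) ℂ :=
  Matrix.of fun j k => if j = k + a then omg p ^ (ip p b k).val else 0

/-- The Weyl operator `W̃(v)` of a vector `v = (a,b) ∈ F_q^{2n} = F_q^n × F_q^n`. -/
noncomputable def Wtv (p : ℕ) {K : Type*} [Field K] [Fintype K] [DecidableEq K]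
    [Algebra (ZMod p) K] {n : ℕ} (v : (Fin n → K) × (Fin n → K)) :
    Matrix (Fin n → K) (Fin n → K) ℂ :=
  Wt p v.1 v.2

/-- The symplectic pairing `⟨v, Jw⟩ = ⟨v.2, w.1⟩ − ⟨v.1, w.2⟩ ∈ F_p` on
`F_q^{2n} = F_q^n × F_q^n`, where `J = [[0, −I_n],[I_n, 0]]`. -/
noncomputable def symp (p : ℕ) {K : Type*} [Field K] [Fintype K] [Algebra (ZMod p) K]
    {n : ℕ} (v w : (Fin n → K) × (Fin n → K)) : ZMod p :=
  ip p v.2 w.1 - ip p v.1 w.2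

lemma ip_add_right (p : ℕ) {K : Type*} [Field K] [Fintype K] [Algebra (ZMod p) K]
    {n : ℕ} (x y y' : Fin n → K) : ip p x (y + y') = ip p x y + ip p x y' := by
  unfold ip
  rw [← map_add]
  congr 1
  simp [mul_add, Finset.sum_add_distrib]

lemma ip_neg_right (p : ℕ) {K : Type*} [Field K] [Fintype K] [Algebra (ZMod p) K]
    {n : ℕ} (x y : Fin n → K) : ip p x (-y) = - ip p x y := by
  unfold ip
  rw [← map_neg]
  congr 1
  simp [mul_neg]

lemma ip_zero_right (p : ℕ) {K : Type*} [Field K] [Fintype K] [Algebra (ZMod p) K]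
    {n : ℕ} (x : Fin n → K) : ip p x 0 = 0 := by
  simp [ip]

/-- `V^{⊥J} = {w ∈ F_q^{2n} : ⟨v, Jw⟩ = 0 for all v ∈ V}`, as an additive subgroup of
`F_q^{2n}` (so that one can form the quotient `F_q^{2n} / V^{⊥J}`). -/
def sympPerp (p : ℕ) {K : Type*} [Field K] [Fintype K] [Algebra (ZMod p) K]
    {n : ℕ} (V : Submodule K ((Fin n → K) × (Fin n → K))) :
    AddSubgroup ((Fin n → K) × (Fin n → K)) where
  carrier := {w | ∀ v ∈ V, symp p v w = 0}
  zero_mem' := by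
    intro v _
    simp [symp, ip_zero_right]
  add_mem' := by
    intro w w' hw hw' v hv
    have h : symp p v (w + w') = symp p v w + symp p v w' := by
      simp only [symp, Prod.fst_add, Prod.snd_add, ip_add_right]
      ring
    rw [h, hw v hv, hw' v hv, add_zero]
  neg_mem' := by
    intro w hw v hv
    have h : symp p v (-w) = - symp p v w := by
      simp only [symp, Prod.fst_neg, Prod.snd_neg, ip_neg_right]
      ring
    rw [h, hw v hv, neg_zero]

lemma omg_prim (p : ℕ) [Fact p.Prime] : IsPrimitiveRoot (omg p) p := by
  simpa [omg] using Complex.isPrimitiveRoot_exp p (Fact.out : p.Prime).ne_zero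

noncomputable def ee (p : ℕ) (k : ZMod p) : ℂ := omg p ^ k.val

lemma ee_add (p : ℕ) [Fact p.Prime] (x y : ZMod p) : ee p (x + y) = ee p x * ee p y := by
  haveI : NeZero p := ⟨(Fact.out : p.Prime).ne_zero⟩
  unfold ee
  rw [← pow_add, ZMod.val_add]
  conv_rhs => rw [← Nat.mod_add_div (x.val + y.val) p]
  rw [pow_add, pow_mul, (omg_prim p).pow_eq_one, one_pow, mul_one]

lemma ee_zero (p : ℕ) [Fact p.Prime] : ee p 0 = 1 := by
  haveI : NeZero p := ⟨(Fact.out : p.Prime).ne_zero⟩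
  simp [ee]

lemma ee_mul_neg (p : ℕ) [Fact p.Prime] (x : ZMod p) : ee p x * ee p (-x) = 1 := by
  rw [← ee_add]; simp [ee_zero]

lemma ee_ne_zero (p : ℕ) (x : ZMod p) : ee p x ≠ 0 := pow_ne_zero _ (Complex.exp_ne_zero _)

lemma star_omg (p : ℕ) [Fact p.Prime] : star (omg p) = (omg p)⁻¹ := by
  show (starRingEnd ℂ) (Complex.exp (2 * (Real.pi : ℂ) * Complex.I / (p : ℂ))) = _
  rw [← Complex.exp_conj]
  have : (starRingEnd ℂ) (2 * (Real.pi : ℂ) * Complex.I / (p : ℂ))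
      = -(2 * (Real.pi : ℂ) * Complex.I / (p : ℂ)) := by
    simp [map_div₀, map_ofNat, neg_div]
  rw [this, Complex.exp_neg]
  rfl

lemma star_ee (p : ℕ) [Fact p.Prime] (x : ZMod p) : star (ee p x) = ee p (-x) := by
  have h1 : star (ee p x) = (ee p x)⁻¹ := by
    unfold ee
    rw [star_pow, star_omg, inv_pow]
  rw [h1]
  exact inv_eq_of_mul_eq_one_right (ee_mul_neg p x)

lemma ee_ne_one (p : ℕ) [Fact p.Prime] {x : ZMod p} (hx : x ≠ 0) : ee p x ≠ 1 := by
  haveI : NeZero p := ⟨(Fact.out : p.Prime).ne_zero⟩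
  exact (omg_prim p).pow_ne_one_of_pos_of_lt (ZMod.val_pos.mpr hx).ne' (ZMod.val_lt x)

section moreHelpers

variable (p : ℕ) [Fact p.Prime] {K : Type*} [Field K] [Fintype K] [DecidableEq K]
  [Algebra (ZMod p) K] {n : ℕ}

lemma omg_val (x : ZMod p) : omg p ^ x.val = ee p x := rfl

lemma ip_comm (x y : Fin n → K) : ip p x y = ip p y x := by
  unfold ip
  congr 1
  exact Finset.sum_congr rfl fun s _ => mul_comm _ _

lemma ip_add_left (x x' y : Fin n → K) : ip p (x + x') y = ip p x y + ip p x' y := by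
  rw [ip_comm, ip_add_right, ip_comm p y x, ip_comm p y x']

lemma ip_neg_left (x y : Fin n → K) : ip p (-x) y = - ip p x y := by
  rw [ip_comm, ip_neg_right, ip_comm]

lemma symp_add_right (v w w' : (Fin n → K) × (Fin n → K)) :
    symp p v (w + w') = symp p v w + symp p v w' := by
  simp only [symp, Prod.fst_add, Prod.snd_add, ip_add_right]
  ring

lemma symp_add_left (v v' w : (Fin n → K) × (Fin n → K)) :
    symp p (v + v') w = symp p v w + symp p v' w := by
  simp only [symp, Prod.fst_add, Prod.snd_add, ip_add_left]
  ring

lemma symp_neg_right (v w : (Fin n → K) × (Fin n → K)) :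
    symp p v (-w) = - symp p v w := by
  simp only [symp, Prod.fst_neg, Prod.snd_neg, ip_neg_right]
  ring

lemma symp_antisymm (v w : (Fin n → K) × (Fin n → K)) :
    symp p v w = - symp p w v := by
  unfold symp
  rw [ip_comm p v.2 w.1, ip_comm p v.1 w.2]
  ring

lemma Wt_mul (v v' : (Fin n → K) × (Fin n → K)) :
    Wtv p v * Wtv p v' = ee p (ip p v.2 v'.1) • Wtv p (v + v') := by
  ext j k
  simp only [Wtv, Wt, Matrix.mul_apply, Matrix.smul_apply, Matrix.of_apply, smul_eq_mul,
    omg_val, ite_mul, zero_mul, mul_ite, mul_zero]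
  rw [Finset.sum_eq_single (k + v'.1)]
  · by_cases h : j = k + v'.1 + v.1
    · have h2 : j = k + (v + v').1 := by
        rw [h, Prod.fst_add]
        abel
      rw [if_pos h, if_pos h2]
      simp only [ip_add_right, Prod.snd_add, ip_add_left, ee_add, if_true]
      ring
    · have h2 : ¬ (j = k + (v + v').1) := by
        intro hc
        exact h (by rw [hc, Prod.fst_add]; abel)
      rw [if_neg h, if_neg h2]
      simp
  · intro m _ hm
    simp [hm]
  · intro h
    exact absurd (Finset.mem_univ _) h

lemma Wt_star (v : (Fin n → K) × (Fin n → K)) :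
    (Wtv p v).conjTranspose = ee p (ip p v.2 v.1) • Wtv p (-v) := by
  ext j k
  simp only [Wtv, Wt, Matrix.conjTranspose_apply, Matrix.smul_apply, Matrix.of_apply,
    omg_val, smul_eq_mul]
  by_cases h : k = j + v.1
  · have h2 : j = k + (-v).1 := by rw [h, Prod.fst_neg]; abel
    rw [if_pos h, if_pos h2, star_ee]
    have h3 : j = k + (-v.1) := by rw [h]; abel
    rw [h3]
    have h4 : (-(ip p v.2 (k + -v.1))) = ip p v.2 v.1 + ip p (-v).2 k := by
      rw [ip_add_right, ip_neg_right, Prod.snd_neg, ip_neg_left]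
      ring
    rw [h4, ee_add]
  · have h2 : ¬ (j = k + (-v).1) := fun hc => h (by rw [hc, Prod.fst_neg]; abel)
    rw [if_neg h, if_neg h2]
    simp

lemma Wt_conj (w' v : (Fin n → K) × (Fin n → K)) :
    Wtv p w' * Wtv p v * (Wtv p w').conjTranspose = ee p (symp p w' v) • Wtv p v := by
  rw [Wt_mul, Wt_star, Matrix.smul_mul, Matrix.mul_smul, Wt_mul, smul_smul, smul_smul]
  have hv : w' + v + -w' = v := by abel
  rw [hv]
  congr 1
  rw [← ee_add, ← ee_add]
  congr 1
  unfold symp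
  simp only [Prod.snd_add, Prod.fst_neg, ip_neg_right, ip_add_left]
  rw [ip_comm p w'.1 v.2]
  ring

open scoped Classical in
lemma char_sum (V : Submodule K ((Fin n → K) × (Fin n → K)))
    (u : (Fin n → K) × (Fin n → K)) :
    (∑ v : V, ee p (symp p (v : (Fin n → K) × (Fin n → K)) u))
      = if u ∈ sympPerp p V then (Fintype.card V : ℂ) else 0 := by
  by_cases hu : u ∈ sympPerp p V
  · rw [if_pos hu]
    have : ∀ v : V, ee p (symp p (v : (Fin n → K) × (Fin n → K)) u) = 1 := by
      intro v
      rw [hu v v.2, ee_zero]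
    simp [this]
  · rw [if_neg hu]
    have : ∃ v0 ∈ V, symp p v0 u ≠ 0 := by
      by_contra hc
      push_neg at hc
      exact hu hc
    obtain ⟨v0, hv0V, hv0⟩ := this
    set S := ∑ v : V, ee p (symp p (v : (Fin n → K) × (Fin n → K)) u) with hS
    have hshift : ee p (symp p v0 u) * S = S := by
      rw [hS, Finset.mul_sum]
      apply Fintype.sum_equiv (Equiv.addRight (⟨v0, hv0V⟩ : V))
      intro v
      simp only [Equiv.coe_addRight]
      rw [show ((v + (⟨v0, hv0V⟩ : V) : V) : (Fin n → K) × (Fin n → K))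
          = (v : (Fin n → K) × (Fin n → K)) + v0 from rfl]
      rw [symp_add_left, ee_add]
      ring
    have h0 : (ee p (symp p v0 u) - 1) * S = 0 := by
      rw [sub_mul, one_mul, hshift, sub_self]
    rcases mul_eq_zero.mp h0 with h | h
    · exact absurd (by linear_combination h : ee p (symp p v0 u) = 1) (ee_ne_one p hv0)
    · exact h


end moreHelpers

/-- Lemma 1 of the paper: with `V`, `c`, and the family of projections
`(P_{[w]})` as in Proposition 2, for all `w, w' ∈ F_q^{2n}`,
`W̃(w') P_{[w]} W̃(w')* = P_{[w+w']}`, where `*` is the conjugate transpose. -/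
theorem stmt_15 (p : ℕ) [Fact p.Prime] (K : Type*) [Field K] [Fintype K] [DecidableEq K]
    [Algebra (ZMod p) K] (n d : ℕ)
    (V : Submodule K ((Fin n → K) × (Fin n → K)))
    (hd : Module.finrank K V = d)
    (hV : ∀ v ∈ V, ∀ v' ∈ V, symp p v v' = 0)
    (c : ((Fin n → K) × (Fin n → K)) → ℂ) (hc0 : c 0 = 1)
    (hmul : ∀ v ∈ V, ∀ v' ∈ V,
      (c v • Wtv p v) * (c v' • Wtv p v') = c (v + v') • Wtv p (v + v'))
    (P : (((Fin n → K) × (Fin n → K)) ⧸ sympPerp p V) →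
      Matrix (Fin n → K) (Fin n → K) ℂ)
    (hproj : ∀ x, (P x).conjTranspose = P x ∧ P x * P x = P x)
    (horth : ∀ x y, x ≠ y → P x * P y = 0)
    (hsum : (∑ᶠ x, P x) = 1)
    (hdec : ∀ v ∈ V, c v • Wtv p v = ∑ᶠ x, omg p ^ (symp p v x.out).val • P x) :
    ∀ w w' : (Fin n → K) × (Fin n → K),
      Wtv p w' * P (QuotientAddGroup.mk w) * (Wtv p w').conjTranspose =
        P (QuotientAddGroup.mk (w + w')) := by
  classical
  intro w w'
  have hcard : (Fintype.card V : ℂ) ≠ 0 := Nat.cast_ne_zero.mpr Fintype.card_ne_zero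
  have key : ∀ u : (Fin n → K) × (Fin n → K),
      (Fintype.card V : ℂ) • P (QuotientAddGroup.mk u)
        = ∑ v : V, ee p (- symp p (v : (Fin n → K) × (Fin n → K)) u) •
            (c v • Wtv p (v : (Fin n → K) × (Fin n → K))) := by
    intro u
    have h1 : ∀ v : V, (c v • Wtv p (v : (Fin n → K) × (Fin n → K)))
        = ∑ x, ee p (symp p (v : (Fin n → K) × (Fin n → K)) x.out) • P x := by
      intro v
      have h := hdec v v.2
      rwa [finsum_eq_sum_of_fintype] at h
    symm
    calc ∑ v : V, ee p (- symp p (v : (Fin n → K) × (Fin n → K)) u) •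
            (c v • Wtv p (v : (Fin n → K) × (Fin n → K)))
        = ∑ v : V, ∑ x, (ee p (- symp p (v : (Fin n → K) × (Fin n → K)) u) *
            ee p (symp p (v : (Fin n → K) × (Fin n → K)) x.out)) • P x := by
          refine Finset.sum_congr rfl fun v _ => ?_
          rw [h1 v, Finset.smul_sum]
          exact Finset.sum_congr rfl fun x _ => (smul_smul _ _ _)
      _ = ∑ x, (∑ v : V, ee p (symp p (v : (Fin n → K) × (Fin n → K)) (x.out - u))) • P x := by
          rw [Finset.sum_comm]
          refine Finset.sum_congr rfl fun x _ => ?_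
          rw [Finset.sum_smul]
          refine Finset.sum_congr rfl fun v _ => ?_
          congr 1
          rw [← ee_add]
          congr 1
          rw [sub_eq_add_neg, symp_add_right, symp_neg_right]
          ring
      _ = ∑ x, (if x = QuotientAddGroup.mk u then (Fintype.card V : ℂ) else 0) • P x := by
          refine Finset.sum_congr rfl fun x _ => ?_
          rw [char_sum]
          congr 1
          have hmem : (x.out - u ∈ sympPerp p V) ↔ x = QuotientAddGroup.mk u := by
            have h5 : (QuotientAddGroup.mk u = x) ↔ -u + x.out ∈ sympPerp p V := by
              conv_lhs => rw [← QuotientAddGroup.out_eq' x]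
              exact QuotientAddGroup.eq
            rw [show x.out - u = -u + x.out from by abel, ← h5, eq_comm]
          by_cases hx : x = QuotientAddGroup.mk u
          · rw [if_pos (hmem.mpr hx), if_pos hx]
          · rw [if_neg (fun hc => hx (hmem.mp hc)), if_neg hx]
      _ = (Fintype.card V : ℂ) • P (QuotientAddGroup.mk u) := by
          simp only [ite_smul, zero_smul, Finset.sum_ite_eq', Finset.mem_univ, if_true]
  have hP : ∀ u : (Fin n → K) × (Fin n → K), P (QuotientAddGroup.mk u)
      = (Fintype.card V : ℂ)⁻¹ • ∑ v : V, ee p (- symp p (v : (Fin n → K) × (Fin n → K)) u) •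
          (c v • Wtv p (v : (Fin n → K) × (Fin n → K))) := by
    intro u
    rw [← key u, smul_smul, inv_mul_cancel₀ hcard, one_smul]
  rw [hP w, hP (w + w')]
  rw [Matrix.mul_smul, Matrix.smul_mul]
  congr 1
  rw [Matrix.mul_sum, Matrix.sum_mul]
  refine Finset.sum_congr rfl fun v _ => ?_
  rw [Matrix.mul_smul, Matrix.mul_smul, Matrix.smul_mul, Matrix.smul_mul, Wt_conj]
  simp only [smul_smul]
  congr 1
  rw [symp_antisymm p w' (v : (Fin n → K) × (Fin n → K)),
    show (- symp p (v : (Fin n → K) × (Fin n → K)) (w + w'))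
      = - symp p (v : (Fin n → K) × (Fin n → K)) w
        + - symp p (v : (Fin n → K) × (Fin n → K)) w' from by rw [symp_add_right]; ring,
    ee_add]
  ring
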